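/- Let S be an OLF system on an odd number n of actors with collective decision function C_S. If actor i has exactly one predecessor, then i is a dummy for C_S, and consequently SAT_S(i) = 2^{n-1}. -/
import Mathlib


open Finset

/-- The set of predecessors of `i` in the digraph with edge set `E`. -/
def preds {n : ℕ} (E : Finset (Fin n × Fin n)) (i : Fin n) : Finset (Fin n) :=
  Finset.univ.filter (fun j => (j, i) ∈ E)

/-- The set of successors of `i` in the digraph with edge set `E`. -/
def succs {n : ℕ} (E : Finset (Fin n × Fin n)) (i : Fin n) : Finset (Fin n) :=
  Finset.univ.filter (fun j => (i, j) ∈ E)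

/-- `E` is the edge set of an OLF system: every edge runs from a vertex with no
predecessors (an opinion leader) to a vertex with no successors (a follower). -/
def IsOLF {n : ℕ} (E : Finset (Fin n × Fin n)) : Prop :=
  ∀ e ∈ E, preds E e.1 = ∅ ∧ succs E e.2 = ∅

/-- One step of the unanimity rule: actor `i` adopts the common decision of its
predecessors (as recorded in `c`) if they are nonempty and unanimous, and keeps
its own initial decision `x i` otherwise. -/
def unanStep {n : ℕ} (E : Finset (Fin n × Fin n)) (x c : Fin n → Bool) (i : Fin n) : Bool :=
  if (preds E i).Nonempty ∧ ∀ j ∈ preds E i, c j = true then true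
  else if (preds E i).Nonempty ∧ ∀ j ∈ preds E i, c j = false then false
  else x i

/-- The collective decision vector of an OLF system. -/
def olfVec {n : ℕ} (E : Finset (Fin n × Fin n)) (x : Fin n → Bool) : Fin n → Bool :=
  unanStep E x x

/-- Simple majority over a decision vector. -/
def majority {n : ℕ} (c : Fin n → Bool) : Bool :=
  decide ((Finset.univ.filter (fun i => c i = true)).card >
          (Finset.univ.filter (fun i => c i = false)).card)

/-- The collective decision function of an OLF system. -/
def olfC {n : ℕ} (E : Finset (Fin n × Fin n)) (x : Fin n → Bool) : Bool :=
  majority (olfVec E x)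

/-- The satisfaction score of actor `i` under a collective decision making model `C`. -/
def SAT {n : ℕ} (C : (Fin n → Bool) → Bool) (i : Fin n) : ℕ :=
  (Finset.univ.filter (fun x : Fin n → Bool => C x = x i)).card

lemma olfVec_indep {n : ℕ} (E : Finset (Fin n × Fin n)) (hE : IsOLF E) (i : Fin n)
    (hP : (preds E i).card = 1) (x y : Fin n → Bool) (h : ∀ k, k ≠ i → x k = y k) :
    olfVec E x = olfVec E y := by
  have hnotpred : ∀ k, i ∉ preds E k := by
    intro k hk
    simp only [preds, Finset.mem_filter, Finset.mem_univ, true_and] at hk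
    have h0 := (hE (i, k) hk).1
    rw [show (i, k).1 = i from rfl] at h0
    rw [h0] at hP
    simp at hP
  funext k
  have hx : ∀ j ∈ preds E k, x j = y j := by
    intro j hj
    exact h j (fun e => hnotpred k (e ▸ hj))
  unfold olfVec unanStep
  by_cases hk : k = i
  · subst hk
    obtain ⟨j, hj⟩ := Finset.card_eq_one.mp hP
    have hxy : x j = y j := hx j (hj ▸ Finset.mem_singleton_self j)
    rw [hj]
    cases hb : x j with
    | true =>
      have hyb : y j = true := hxy ▸ hb
      simp [hb, hyb]
    | false =>
      have hyb : y j = false := hxy ▸ hb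
      simp [hb, hyb]
  · by_cases h1 : (preds E k).Nonempty ∧ ∀ j ∈ preds E k, x j = true
    · have h1' : (preds E k).Nonempty ∧ ∀ j ∈ preds E k, y j = true :=
        ⟨h1.1, fun j hj => (hx j hj) ▸ h1.2 j hj⟩
      rw [if_pos h1, if_pos h1']
    · have h1' : ¬((preds E k).Nonempty ∧ ∀ j ∈ preds E k, y j = true) := by
        intro hc; exact h1 ⟨hc.1, fun j hj => (hx j hj).trans (hc.2 j hj)⟩
      by_cases h2 : (preds E k).Nonempty ∧ ∀ j ∈ preds E k, x j = false
      · have h2' : (preds E k).Nonempty ∧ ∀ j ∈ preds E k, y j = false :=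
          ⟨h2.1, fun j hj => (hx j hj) ▸ h2.2 j hj⟩
        rw [if_neg h1, if_neg h1', if_pos h2, if_pos h2']
      · have h2' : ¬((preds E k).Nonempty ∧ ∀ j ∈ preds E k, y j = false) := by
          intro hc; exact h2 ⟨hc.1, fun j hj => (hx j hj).trans (hc.2 j hj)⟩
        rw [if_neg h1, if_neg h1', if_neg h2, if_neg h2', h k hk]

lemma olfC_indep {n : ℕ} (E : Finset (Fin n × Fin n)) (hE : IsOLF E) (i : Fin n)
    (hP : (preds E i).card = 1) (x y : Fin n → Bool) (h : ∀ k, k ≠ i → x k = y k) :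
    olfC E x = olfC E y := by
  unfold olfC
  rw [olfVec_indep E hE i hP x y h]

/-- In an OLF system on an odd number `n` of actors, an actor with exactly one
predecessor is a dummy, and consequently its satisfaction score is `2^(n-1)`. -/
theorem olf_one_pred_dummy (n : ℕ) (hn : Odd n) (E : Finset (Fin n × Fin n)) (hE : IsOLF E)
    (i : Fin n) (hP : (preds E i).card = 1) :
    (∀ X : Finset (Fin n),
      olfC E (fun j => decide (j ∈ X)) = true →
      olfC E (fun j => decide (j ∈ X.erase i)) = true) ∧
    SAT (olfC E) i = 2 ^ (n - 1) := by
  constructor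
  · intro X hX
    rw [← hX]
    apply olfC_indep E hE i hP
    intro k hk
    simp [Finset.mem_erase, hk]
  · unfold SAT
    set A := Finset.univ.filter (fun x : Fin n → Bool => olfC E x = x i) with hA
    set B := Finset.univ.filter (fun x : Fin n → Bool => ¬(olfC E x = x i)) with hB
    have hsum : A.card + B.card = 2 ^ n := by
      rw [hA, hB, Finset.card_filter_add_card_filter_not]
      simp [Fintype.card_fun]
    have hmemg : ∀ x : Fin n → Bool, olfC E (Function.update x i (! x i)) = olfC E x := by
      intro x
      apply olfC_indep E hE i hP
      intro k hk
      rw [Function.update_of_ne hk]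
    have hcard : A.card = B.card := by
      refine Finset.card_bij' (fun x _ => Function.update x i (! x i))
        (fun x _ => Function.update x i (! x i)) ?_ ?_ ?_ ?_
      · intro x hx
        simp only [hA, Finset.mem_filter, Finset.mem_univ, true_and] at hx
        simp only [hB, Finset.mem_filter, Finset.mem_univ, true_and]
        rw [hmemg, Function.update_self, hx]
        cases x i <;> simp
      · intro x hx
        simp only [hB, Finset.mem_filter, Finset.mem_univ, true_and] at hx
        simp only [hA, Finset.mem_filter, Finset.mem_univ, true_and]
        rw [hmemg, Function.update_self]
        cases h : olfC E x
        · cases h2 : x i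
          · rw [h, h2] at hx; simp at hx
          · simp [h2]
        · cases h2 : x i
          · simp [h2]
          · rw [h, h2] at hx; simp at hx
      · intro x _
        funext k
        by_cases hk : k = i
        · subst hk; simp
        · simp [Function.update_of_ne hk]
      · intro x _
        funext k
        by_cases hk : k = i
        · subst hk; simp
        · simp [Function.update_of_ne hk]
    have hn1 : 1 ≤ n := i.pos
    have hpow : 2 ^ n = 2 * 2 ^ (n - 1) := by
      conv_lhs => rw [show n = (n - 1) + 1 by omega]
      rw [pow_succ]; ring
    omega
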